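/- Let n ≥ 1 and let M and 𝒜 be as in the context. The restriction of the map Log to the standard hyperplane M is injective over the boundary of the amoeba: if z, z′ ∈ M satisfy Log(z) = Log(z′) and this common point lies in the frontier (topological boundary) of 𝒜, then z = z′. -/

import Mathlib

open scoped BigOperators

/-- The logarithm map `Log(z) = (log |z₁|, …, log |zₙ|)`. -/
noncomputable def LogMap {n : ℕ} (z : Fin n → ℂ) : Fin n → ℝ :=
  fun i => Real.log (‖z i‖)

/-- The standard hyperplane `{z ∈ (ℂ*)ⁿ : z₁ + ⋯ + zₙ = 1}`. -/
def stdHyperplane (n : ℕ) : Set (Fin n → ℂ) :=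
  {z | (∀ i, z i ≠ 0) ∧ ∑ i, z i = 1}

/-- The amoeba of the standard hyperplane. -/
noncomputable def stdAmoeba (n : ℕ) : Set (Fin n → ℝ) :=
  LogMap '' stdHyperplane n

open Finset


lemma re_eq_abs_imp {w : ℂ} (h : w.re = ‖w‖) : w = (‖w‖ : ℂ) := by
  have h1 : ‖w‖ ^ 2 = w.re * w.re + w.im * w.im := by
    rw [Complex.sq_norm, Complex.normSq_apply]
  rw [← h] at h1
  have him : w.im = 0 := by
    have h2 : w.im * w.im = 0 := by nlinarith [h1]
    exact mul_self_eq_zero.mp h2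
  apply Complex.ext <;> simp [← h, him]

lemma circle_point (c ta c' : ℝ) (hta : 0 ≤ ta) (hc : 0 ≤ c)
    (h1 : |c - ta| ≤ c') (h2 : c' ≤ c + ta) :
    ∃ za : ℂ, ‖za‖ = ta ∧ ‖(c : ℂ) - za‖ = c' := by
  have hc' : 0 ≤ c' := le_trans (abs_nonneg _) h1
  rcases eq_or_lt_of_le hc with hc0 | hcpos
  · have hca : |c - ta| = ta := by rw [← hc0]; simp [abs_of_nonneg hta]
    have hta' : c' = ta := le_antisymm (by rw [← hc0] at h2; linarith) (by rw [← hca]; exact h1)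
    refine ⟨(ta : ℂ), by simp [abs_of_nonneg hta], ?_⟩
    rw [← hc0]
    simp [hta', abs_of_nonneg hta]
  · set x := (c^2 + ta^2 - c'^2) / (2*c) with hxdef
    have h2c : (2*c) ≠ 0 := by positivity
    have hx2c : 2*c*x = c^2 + ta^2 - c'^2 := by rw [hxdef]; field_simp
    have hsq1 : (c - ta)^2 ≤ c'^2 := by
      have := abs_nonneg (c - ta)
      nlinarith [sq_abs (c - ta)]
    have hsq2 : c'^2 ≤ (c + ta)^2 := by nlinarith
    have hxle : x ≤ ta := by nlinarith
    have hxge : -ta ≤ x := by nlinarith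
    have hyn : 0 ≤ ta^2 - x^2 := by nlinarith
    set y := Real.sqrt (ta^2 - x^2) with hydef
    have hy2 : y^2 = ta^2 - x^2 := Real.sq_sqrt hyn
    refine ⟨⟨x, y⟩, ?_, ?_⟩
    · rw [Complex.norm_def, Complex.normSq_mk]
      have : x * x + y * y = ta^2 := by nlinarith [hy2]
      rw [this, Real.sqrt_sq hta]
    · have hsub : ((c : ℂ) - ⟨x, y⟩) = ⟨c - x, -y⟩ := by
        apply Complex.ext <;> simp
      rw [hsub, Complex.norm_def, Complex.normSq_mk]
      have : (c - x) * (c - x) + -y * -y = c'^2 := by nlinarith [hy2, hx2c]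
      rw [this, Real.sqrt_sq hc']

lemma polygon {ι : Type*} [DecidableEq ι] (s : Finset ι) :
    ∀ (t : ι → ℝ) (c : ℝ), (∀ i ∈ s, 0 ≤ t i) → 0 ≤ c → c ≤ ∑ i ∈ s, t i →
    (∀ i ∈ s, t i ≤ c + ∑ j ∈ s.erase i, t j) →
    ∃ z : ι → ℂ, (∀ i ∈ s, ‖z i‖ = t i) ∧ ∑ i ∈ s, z i = (c : ℂ) := by
  induction s using Finset.induction with
  | empty =>
    intro t c _ hc hcle _
    have hc0 : c = 0 := le_antisymm (by simpa using hcle) hc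
    exact ⟨fun _ => 0, fun i hi => absurd hi (notMem_empty i), by simp [hc0]⟩
  | @insert a s' ha ih =>
    intro t c ht hc hcle hpoly
    set T' := ∑ i ∈ s', t i with hT'def
    have hta : 0 ≤ t a := ht a (mem_insert_self _ _)
    have ht' : ∀ i ∈ s', 0 ≤ t i := fun i hi => ht i (mem_insert_of_mem hi)
    have hT'0 : 0 ≤ T' := sum_nonneg ht'
    have hsum_ins : ∑ i ∈ insert a s', t i = t a + T' := sum_insert ha
    have hcle' : c ≤ t a + T' := by rw [← hsum_ins]; exact hcle
    have hta_le : t a ≤ c + T' := by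
      have h := hpoly a (mem_insert_self _ _)
      rwa [erase_insert ha] at h
    set m := s'.fold max 0 (fun i => 2 * t i - T') with hmdef
    set c' := max |c - t a| m with hc'def
    have h1 : |c - t a| ≤ c' := le_max_left _ _
    have hc'0 : 0 ≤ c' := le_trans (abs_nonneg _) h1
    have hm_le_T' : m ≤ T' := (fold_max_le _).mpr ⟨hT'0, fun i hi => by
      have : t i ≤ T' := single_le_sum ht' hi
      linarith⟩
    have habs_le_T' : |c - t a| ≤ T' := abs_le.mpr ⟨by linarith, by linarith⟩
    have hc'_le_T' : c' ≤ T' := max_le habs_le_T' hm_le_T'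
    have herase : ∀ i ∈ s', t i + ∑ j ∈ s'.erase i, t j = T' := fun i hi =>
      add_sum_erase s' t hi
    have hm_le : m ≤ c + t a := (fold_max_le _).mpr ⟨by linarith, fun i hi => by
      have hia : i ≠ a := fun h => ha (h ▸ hi)
      have hp := hpoly i (mem_insert_of_mem hi)
      rw [erase_insert_of_ne (Ne.symm hia), sum_insert (fun h => ha (mem_of_mem_erase h))] at hp
      have he := herase i hi
      linarith⟩
    have h2 : c' ≤ c + t a := max_le (abs_le.mpr ⟨by linarith, by linarith⟩) hm_le
    obtain ⟨za, hza, hdza⟩ := circle_point c (t a) c' hta hc h1 h2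
    have hrec : ∀ i ∈ s', t i ≤ c' + ∑ j ∈ s'.erase i, t j := fun i hi => by
      have hfle : 2 * t i - T' ≤ m := (le_fold_max _).mpr (Or.inr ⟨i, hi, le_refl _⟩)
      have hmc' : m ≤ c' := le_max_right _ _
      have he := herase i hi
      linarith
    obtain ⟨w, hw, hwsum⟩ := ih t c' ht' hc'0 hc'_le_T' hrec
    set u : ℂ := if c' = 0 then 1 else ((c : ℂ) - za) / c' with hudef
    have hu : ‖u‖ = 1 := by
      by_cases h : c' = 0
      · simp [hudef, h]
      · rw [hudef, if_neg h, norm_div, hdza, Complex.norm_real, Real.norm_eq_abs, abs_of_nonneg hc'0,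
          div_self h]
    have huc : u * (c' : ℂ) = (c : ℂ) - za := by
      by_cases h : c' = 0
      · have h0 : ‖(c : ℂ) - za‖ = 0 := by rw [hdza, h]
        have h0' : (c : ℂ) = za := by simpa [sub_eq_zero] using h0
        simp [h, h0']
      · rw [hudef, if_neg h]
        have : (c' : ℂ) ≠ 0 := by exact_mod_cast h
        field_simp
    refine ⟨fun i => if i = a then za else u * w i, ?_, ?_⟩
    · intro i hi
      rcases mem_insert.mp hi with rfl | hi'
      · simp [hza]
      · have hia : i ≠ a := fun h => ha (h ▸ hi')
        simp only [if_neg hia, norm_mul, hu, one_mul, hw i hi']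
    · rw [sum_insert ha, if_pos rfl]
      have hrw : ∑ i ∈ s', (if i = a then za else u * w i) = u * (c' : ℂ) := by
        rw [← hwsum, Finset.mul_sum]
        exact sum_congr rfl fun i hi => if_neg (fun (h : i = a) => ha (h ▸ hi))
      rw [hrw, huc]
      ring

lemma mem_interior_amoeba {n : ℕ} (x : Fin n → ℝ)
    (h1 : 1 < ∑ i, Real.exp (x i))
    (h2 : ∀ k, Real.exp (x k) < 1 + ∑ j ∈ univ.erase k, Real.exp (x j)) :
    x ∈ interior (stdAmoeba n) := by
  set U : Set (Fin n → ℝ) := {y | 1 < ∑ i, Real.exp (y i)} ∩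
    ⋂ k, {y | Real.exp (y k) < 1 + ∑ j ∈ univ.erase k, Real.exp (y j)} with hUdef
  have hUopen : IsOpen U := by
    apply IsOpen.inter
    · exact isOpen_lt continuous_const
        (continuous_finset_sum _ fun i _ => Real.continuous_exp.comp (continuous_apply i))
    · exact isOpen_iInter_of_finite fun k => isOpen_lt
        (Real.continuous_exp.comp (continuous_apply k))
        (continuous_const.add
          (continuous_finset_sum _ fun j _ => Real.continuous_exp.comp (continuous_apply j)))
  have hxU : x ∈ U := ⟨h1, Set.mem_iInter.mpr h2⟩
  have hUsub : U ⊆ stdAmoeba n := by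
    rintro y ⟨hy1, hy2⟩
    rw [Set.mem_iInter] at hy2
    obtain ⟨zz, hzz, hzsum⟩ := polygon (univ : Finset (Fin n)) (fun i => Real.exp (y i)) 1
      (fun i _ => (Real.exp_pos _).le) zero_le_one (le_of_lt hy1)
      (fun i _ => le_of_lt (hy2 i))
    refine ⟨zz, ⟨fun i => ?_, ?_⟩, ?_⟩
    · intro h0
      have h := hzz i (mem_univ i)
      rw [h0, norm_zero] at h
      exact absurd h.symm (ne_of_gt (Real.exp_pos _))
    · simpa using hzsum
    · funext i
      simp [LogMap, hzz i (mem_univ i), Real.log_exp]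
  exact mem_interior.mpr ⟨U, hUsub, hUopen, hxU⟩

lemma caseA {n : ℕ} {z : Fin n → ℂ} (hsum : ∑ i, z i = 1)
    (hA : ∑ i, ‖z i‖ = 1) (i : Fin n) : z i = (‖z i‖ : ℂ) := by
  have hre : ∑ j, (z j).re = ∑ j, ‖z j‖ := by
    rw [← Complex.re_sum, hsum, hA, Complex.one_re]
  have h := (Finset.sum_eq_sum_iff_of_le (fun j _ => Complex.re_le_norm (z j))).mp hre i
    (mem_univ i)
  exact re_eq_abs_imp h

lemma caseB {n : ℕ} {z : Fin n → ℂ} (hsum : ∑ i, z i = 1) {k : Fin n}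
    (hB : ‖z k‖ = 1 + ∑ j ∈ univ.erase k, ‖z j‖) :
    (z k = (‖z k‖ : ℂ)) ∧
      ∀ j ∈ univ.erase k, z j = -(‖z j‖ : ℂ) := by
  set S : ℂ := ∑ j ∈ univ.erase k, z j with hSdef
  set T : ℝ := ∑ j ∈ univ.erase k, ‖z j‖ with hTdef
  have hzk : z k = 1 - S := by
    have h := add_sum_erase univ z (mem_univ k)
    rw [hsum] at h
    exact eq_sub_of_add_eq h
  have hS_le : ‖S‖ ≤ T := norm_sum_le _ _
  have key : ‖1 - S‖ ≤ 1 + ‖S‖ := by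
    calc ‖1 - S‖ = ‖(1 : ℂ) - S‖ := rfl
    _ ≤ ‖(1 : ℂ)‖ + ‖S‖ := norm_sub_le _ _
    _ = 1 + ‖S‖ := by rw [norm_one]
  have e1 : ‖z k‖ = ‖1 - S‖ := by rw [hzk]
  have habs1S : ‖1 - S‖ = 1 + ‖S‖ := by
    rw [e1] at hB; linarith
  have hST : ‖S‖ = T := by rw [e1] at hB; linarith
  -- derive S.re = - abs S
  have hsqabs : ‖S‖ ^ 2 = S.re * S.re + S.im * S.im := by
    rw [Complex.sq_norm, Complex.normSq_apply]
  have hsq1S : (1 - S.re) * (1 - S.re) + S.im * S.im = (1 + ‖S‖)^2 := by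
    have h := congrArg (fun r : ℝ => r ^ 2) habs1S
    rw [Complex.sq_norm, Complex.normSq_apply] at h
    simpa using h
  have hreS : S.re = -‖S‖ := by nlinarith [hsq1S, hsqabs]
  -- sum of real parts equality
  have hresum : ∑ j ∈ univ.erase k, (-(z j)).re = ∑ j ∈ univ.erase k, ‖-(z j)‖ := by
    have hl : ∑ j ∈ univ.erase k, (-(z j)).re = -S.re := by
      rw [hSdef, ← Complex.re_sum]
      simp [Finset.sum_neg_distrib]
    have hr : ∑ j ∈ univ.erase k, ‖-(z j)‖ = T := by
      rw [hTdef]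
      exact sum_congr rfl fun j _ => norm_neg _
    rw [hl, hr, hreS, hST]; ring
  have hptw := (Finset.sum_eq_sum_iff_of_le
    (fun j _ => Complex.re_le_norm (-(z j)))).mp hresum
  have hneg : ∀ j ∈ univ.erase k, z j = -(‖z j‖ : ℂ) := by
    intro j hj
    have h := re_eq_abs_imp (hptw j hj)
    rw [norm_neg] at h
    linear_combination -h
  constructor
  · have hSval : S = -(T : ℂ) := by
      rw [hSdef, hTdef]
      push_cast
      rw [← Finset.sum_neg_distrib]
      exact sum_congr rfl fun j hj => hneg j hj
    rw [hB, hzk, hSval]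
    push_cast
    ring
  · exact hneg

/-- The restriction of `Log` to the standard hyperplane is injective over
the boundary of the amoeba. -/
theorem statement8 (n : ℕ) (hn : 1 ≤ n) (z z' : Fin n → ℂ)
    (hz : z ∈ stdHyperplane n) (hz' : z' ∈ stdHyperplane n)
    (heq : LogMap z = LogMap z') (hfr : LogMap z ∈ frontier (stdAmoeba n)) :
    z = z' := by
  obtain ⟨hz0, hzsum⟩ := hz
  obtain ⟨hz'0, hz'sum⟩ := hz'
  have htpos : ∀ i, 0 < ‖z i‖ := fun i => norm_pos_iff.mpr (hz0 i)
  have ht'pos : ∀ i, 0 < ‖z' i‖ := fun i => norm_pos_iff.mpr (hz'0 i)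
  have habs' : ∀ i, ‖z' i‖ = ‖z i‖ := by
    intro i
    have h := congrFun heq i
    simp only [LogMap] at h
    rw [← Real.exp_log (ht'pos i), ← h, Real.exp_log (htpos i)]
  have hni : LogMap z ∉ interior (stdAmoeba n) := hfr.2
  have hexp : ∀ i, Real.exp (LogMap z i) = ‖z i‖ := fun i =>
    Real.exp_log (htpos i)
  have hge1 : 1 ≤ ∑ i, ‖z i‖ := by
    have h := norm_sum_le univ z
    rw [hzsum] at h
    simpa using h
  have hkle : ∀ k, ‖z k‖ ≤ 1 + ∑ j ∈ univ.erase k, ‖z j‖ := by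
    intro k
    have hzk : z k = 1 - ∑ j ∈ univ.erase k, z j := by
      have h := add_sum_erase univ z (mem_univ k)
      rw [hzsum] at h
      exact eq_sub_of_add_eq h
    calc ‖z k‖ = ‖(1 : ℂ) - ∑ j ∈ univ.erase k, z j‖ := by rw [hzk]
    _ ≤ ‖(1 : ℂ)‖ + ‖∑ j ∈ univ.erase k, z j‖ := norm_sub_le _ _
    _ ≤ 1 + ∑ j ∈ univ.erase k, ‖z j‖ := by
        rw [norm_one]
        exact (add_le_add_iff_left 1).mpr (norm_sum_le _ _)
  have hdich : (∑ i, ‖z i‖ = 1) ∨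
      ∃ k, ‖z k‖ = 1 + ∑ j ∈ univ.erase k, ‖z j‖ := by
    by_contra hcon
    push_neg at hcon
    obtain ⟨hne1, hne2⟩ := hcon
    apply hni
    apply mem_interior_amoeba
    · rw [show ∑ i, Real.exp (LogMap z i) = ∑ i, ‖z i‖ from
        sum_congr rfl fun i _ => hexp i]
      exact lt_of_le_of_ne hge1 (Ne.symm hne1)
    · intro k
      rw [hexp k, show ∑ j ∈ univ.erase k, Real.exp (LogMap z j)
          = ∑ j ∈ univ.erase k, ‖z j‖ from sum_congr rfl fun j _ => hexp j]
      exact lt_of_le_of_ne (hkle k) (hne2 k)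
  rcases hdich with hA | ⟨k, hB⟩
  · funext i
    have h1 := caseA hzsum hA i
    have hA' : ∑ i, ‖z' i‖ = 1 := by
      rw [sum_congr rfl fun i _ => habs' i]; exact hA
    have h2 := caseA hz'sum hA' i
    rw [h1, h2, habs' i]
  · have hB' : ‖z' k‖ = 1 + ∑ j ∈ univ.erase k, ‖z' j‖ := by
      rw [habs' k, sum_congr rfl fun j _ => habs' j]; exact hB
    obtain ⟨hk, hrest⟩ := caseB hzsum hB
    obtain ⟨hk', hrest'⟩ := caseB hz'sum hB'
    funext i
    by_cases hik : i = k
    · subst hik; rw [hk, hk', habs' i]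
    · have hi : i ∈ univ.erase k := mem_erase.mpr ⟨hik, mem_univ i⟩
      rw [hrest i hi, hrest' i hi, habs' i]
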